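/- Let 0 ≤ θ < π/2, let A and B be n×n complex matrices in the sector class S_θ, let 0 < m ≤ M with mI ≤ ℜA ≤ MI and mI ≤ ℜB ≤ MI, and let v ∈ [0,1]. Then |det(A∇_vB)| ≤ secⁿθ · Kⁿ · |det(A!_vB)|, where K = (M+m)²/(4mM) and |·| is the complex modulus. (This is the σ = !_v instance of the final clause of the paper's determinant theorem, comparing the arithmetic mean with any mean between !_v and ∇_v.) -/

import Mathlib

open Matrix
open scoped ComplexOrder

/-- The real part `(A + Aᴴ)/2` of a complex matrix. -/
noncomputable def matRe {n : ℕ} (A : Matrix (Fin n) (Fin n) ℂ) : Matrix (Fin n) (Fin n) ℂ :=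
  (2⁻¹ : ℂ) • (A + Aᴴ)

/-- The imaginary part `(A - Aᴴ)/(2i)` of a complex matrix. -/
noncomputable def matIm {n : ℕ} (A : Matrix (Fin n) (Fin n) ℂ) : Matrix (Fin n) (Fin n) ℂ :=
  (2 * Complex.I)⁻¹ • (A - Aᴴ)

/-- Loewner order: `Y - X` is positive semidefinite. -/
def loewnerLE {n : ℕ} (X Y : Matrix (Fin n) (Fin n) ℂ) : Prop := (Y - X).PosSemidef

/-- `A` lies in the sector class `S_θ`: its real part is positive definite and for all `x`,
`|⟨(ℑA)x, x⟩| ≤ tan θ · ⟨(ℜA)x, x⟩`. -/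
def sectorClass {n : ℕ} (θ : ℝ) (A : Matrix (Fin n) (Fin n) ℂ) : Prop :=
  (matRe A).PosDef ∧
    ∀ x : Fin n → ℂ,
      |(star x ⬝ᵥ (matIm A).mulVec x).re| ≤ Real.tan θ * (star x ⬝ᵥ (matRe A).mulVec x).re

/-- The `v`-weighted arithmetic mean `A ∇_v B = v A + (1 - v) B`. -/
noncomputable def amean {n : ℕ} (v : ℝ) (A B : Matrix (Fin n) (Fin n) ℂ) :
    Matrix (Fin n) (Fin n) ℂ :=
  (v : ℂ) • A + ((1 - v : ℝ) : ℂ) • B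

/-- The `v`-weighted harmonic mean `A !_v B = (v A⁻¹ + (1 - v) B⁻¹)⁻¹`. -/
noncomputable def hmean {n : ℕ} (v : ℝ) (A B : Matrix (Fin n) (Fin n) ℂ) :
    Matrix (Fin n) (Fin n) ℂ :=
  ((v : ℂ) • A⁻¹ + ((1 - v : ℝ) : ℂ) • B⁻¹)⁻¹

/-- A linear map on matrices is positive and unital. -/
def IsPosUnitalMap {n : ℕ}
    (Φ : Matrix (Fin n) (Fin n) ℂ →ₗ[ℂ] Matrix (Fin n) (Fin n) ℂ) : Prop :=
  Φ 1 = 1 ∧ ∀ X : Matrix (Fin n) (Fin n) ℂ, X.PosSemidef → (Φ X).PosSemidef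

/-- The numerical radius `ω(A) = sup { |⟨Ax, x⟩| : ‖x‖ = 1 }` (ℓ² norm). -/
noncomputable def numRadius {n : ℕ} (A : Matrix (Fin n) (Fin n) ℂ) : ℝ :=
  sSup {r : ℝ | ∃ x : EuclideanSpace ℂ (Fin n), ‖x‖ = 1 ∧
    r = ‖star (x : Fin n → ℂ) ⬝ᵥ A.mulVec (x : Fin n → ℂ)‖}

/-- The spectral norm (ℓ² → ℓ² operator norm) of a matrix. -/
noncomputable def matSpectralNorm {n : ℕ} (A : Matrix (Fin n) (Fin n) ℂ) : ℝ :=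
  ‖Matrix.toEuclideanCLM (𝕜 := ℂ) A‖

namespace SectorAux

variable {n : ℕ}

lemma matRe_isHermitian (A : Matrix (Fin n) (Fin n) ℂ) : (matRe A).IsHermitian := by
  show _ᴴ = _
  unfold matRe
  ext i j
  simp only [conjTranspose_apply, Matrix.add_apply, Matrix.smul_apply, smul_eq_mul,
    Complex.star_def, _root_.map_mul, map_add, Complex.conj_conj, map_inv₀, map_ofNat]
  ring

lemma matIm_isHermitian (A : Matrix (Fin n) (Fin n) ℂ) : (matIm A).IsHermitian := by
  show _ᴴ = _
  unfold matIm
  ext i j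
  simp only [conjTranspose_apply, Matrix.sub_apply, Matrix.smul_apply, smul_eq_mul,
    Complex.star_def, _root_.map_mul, map_sub, map_inv₀, Complex.conj_conj, Complex.conj_I,
    map_ofNat, mul_neg, inv_neg, neg_mul]
  ring

lemma matRe_add_smul_matIm (A : Matrix (Fin n) (Fin n) ℂ) :
    matRe A + Complex.I • matIm A = A := by
  unfold matRe matIm
  rw [smul_smul]
  have h1 : Complex.I * (2 * Complex.I)⁻¹ = 2⁻¹ := by
    rw [mul_inv]
    rw [mul_comm (2⁻¹ : ℂ), ← mul_assoc, mul_inv_cancel₀ Complex.I_ne_zero, one_mul]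
  rw [h1, ← smul_add]
  have h2 : (A + Aᴴ) + (A - Aᴴ) = (2 : ℂ) • A := by
    rw [two_smul]; abel
  rw [h2, smul_smul]
  norm_num

lemma matRe_add (A B : Matrix (Fin n) (Fin n) ℂ) : matRe (A + B) = matRe A + matRe B := by
  unfold matRe
  rw [conjTranspose_add]
  have : (A + B) + (Aᴴ + Bᴴ) = (A + Aᴴ) + (B + Bᴴ) := by abel
  rw [this, smul_add]

lemma matIm_add (A B : Matrix (Fin n) (Fin n) ℂ) : matIm (A + B) = matIm A + matIm B := by
  unfold matIm
  rw [conjTranspose_add]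
  have : (A + B) - (Aᴴ + Bᴴ) = (A - Aᴴ) + (B - Bᴴ) := by abel
  rw [this, smul_add]

lemma matRe_smul_real (r : ℝ) (A : Matrix (Fin n) (Fin n) ℂ) :
    matRe ((r : ℂ) • A) = (r : ℂ) • matRe A := by
  unfold matRe
  rw [conjTranspose_smul, Complex.star_def, Complex.conj_ofReal, ← smul_add, smul_comm]

lemma matIm_smul_real (r : ℝ) (A : Matrix (Fin n) (Fin n) ℂ) :
    matIm ((r : ℂ) • A) = (r : ℂ) • matIm A := by
  unfold matIm
  rw [conjTranspose_smul, Complex.star_def, Complex.conj_ofReal, ← smul_sub, smul_comm]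

lemma dot_conj (Mx C : Matrix (Fin n) (Fin n) ℂ) (x : Fin n → ℂ) :
    star x ⬝ᵥ (Cᴴ * Mx * C) *ᵥ x = star (C *ᵥ x) ⬝ᵥ Mx *ᵥ (C *ᵥ x) := by
  rw [← mulVec_mulVec, ← mulVec_mulVec, dotProduct_mulVec, ← star_mulVec]

lemma isUnit_det_of_matRe_posDef {X : Matrix (Fin n) (Fin n) ℂ} (h : (matRe X).PosDef) :
    IsUnit X.det := by
  rw [isUnit_iff_ne_zero]
  intro h0
  obtain ⟨x, hx, hXx⟩ := (Matrix.exists_mulVec_eq_zero_iff).mpr h0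
  have h2 := h.dotProduct_mulVec_pos hx
  have h3 : (matRe X) *ᵥ x = (2⁻¹ : ℂ) • (Xᴴ *ᵥ x) := by
    unfold matRe
    rw [smul_mulVec, add_mulVec, hXx, zero_add]
  have h4 : star x ⬝ᵥ Xᴴ *ᵥ x = 0 := by
    rw [dotProduct_mulVec, ← star_mulVec, hXx]
    simp
  rw [h3, dotProduct_smul, h4] at h2
  simp at h2

lemma matRe_inv {X : Matrix (Fin n) (Fin n) ℂ} (hX : IsUnit X.det) :
    matRe X⁻¹ = (X⁻¹)ᴴ * matRe X * X⁻¹ := by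
  have hXi : X * X⁻¹ = 1 := mul_nonsing_inv X hX
  unfold matRe
  rw [Matrix.mul_smul, Matrix.smul_mul]
  congr 1
  have : (X⁻¹)ᴴ * (X + Xᴴ) * X⁻¹ = (X⁻¹)ᴴ * X * X⁻¹ + (X⁻¹)ᴴ * Xᴴ * X⁻¹ := by
    rw [Matrix.mul_add, Matrix.add_mul]
  rw [this, mul_assoc, hXi, mul_one, ← conjTranspose_mul, hXi, conjTranspose_one, one_mul,
    add_comm]

lemma posSemidef_real_smul {P : Matrix (Fin n) (Fin n) ℂ} (hP : P.PosSemidef) {r : ℝ}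
    (hr : 0 ≤ r) : ((r : ℂ) • P).PosSemidef := by
  refine PosSemidef.of_dotProduct_mulVec_nonneg ?_ fun x => ?_
  · unfold Matrix.IsHermitian
    rw [conjTranspose_smul, Complex.star_def, Complex.conj_ofReal, hP.1]
  · rw [smul_mulVec, dotProduct_smul, smul_eq_mul]
    exact mul_nonneg (Complex.zero_le_real.mpr hr) (hP.dotProduct_mulVec_nonneg x)

lemma posDef_real_smul {P : Matrix (Fin n) (Fin n) ℂ} (hP : P.PosDef) {r : ℝ}
    (hr : 0 < r) : ((r : ℂ) • P).PosDef := by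
  refine PosDef.of_dotProduct_mulVec_pos ?_ fun x hx => ?_
  · unfold Matrix.IsHermitian
    rw [conjTranspose_smul, Complex.star_def, Complex.conj_ofReal, hP.1]
  · rw [smul_mulVec, dotProduct_smul, smul_eq_mul]
    exact mul_pos (Complex.zero_lt_real.mpr hr) (hP.dotProduct_mulVec_pos hx)

lemma convex_posDef {P Q : Matrix (Fin n) (Fin n) ℂ} (hP : P.PosDef) (hQ : Q.PosDef)
    (v : ℝ) (hv0 : 0 ≤ v) (hv1 : v ≤ 1) :
    ((v : ℂ) • P + ((1 - v : ℝ) : ℂ) • Q).PosDef := by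
  rcases eq_or_lt_of_le hv0 with h0 | h0
  · have : ((v : ℂ) • P + ((1 - v : ℝ) : ℂ) • Q) = Q := by
      rw [← h0]
      norm_num
    rw [this]; exact hQ
  · exact (posDef_real_smul hP h0).add_posSemidef
      (posSemidef_real_smul hQ.posSemidef (by linarith))

lemma posDef_conj {Ax C : Matrix (Fin n) (Fin n) ℂ} (hA : Ax.PosDef) (hC : IsUnit C.det) :
    (Cᴴ * Ax * C).PosDef := by
  refine PosDef.of_dotProduct_mulVec_pos (isHermitian_conjTranspose_mul_mul C hA.1) fun x hx => ?_
  rw [dot_conj]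
  refine hA.dotProduct_mulVec_pos fun hCx => hx ?_
  have : x = (C⁻¹ * C) *ᵥ x := by rw [nonsing_inv_mul C hC, one_mulVec]
  rw [this, ← mulVec_mulVec, hCx, mulVec_zero]

/-! ### Spectral toolkit -/

variable {T : Matrix (Fin n) (Fin n) ℂ}

noncomputable def Phi (hT : T.IsHermitian) (f : Fin n → ℂ) : Matrix (Fin n) (Fin n) ℂ :=
  (hT.eigenvectorUnitary : Matrix (Fin n) (Fin n) ℂ) * diagonal f *
    star (hT.eigenvectorUnitary : Matrix (Fin n) (Fin n) ℂ)

lemma Phi_add (hT : T.IsHermitian) (f g : Fin n → ℂ) :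
    Phi hT f + Phi hT g = Phi hT (f + g) := by
  unfold Phi
  rw [← Matrix.add_mul, ← Matrix.mul_add, diagonal_add]
  rfl

lemma Phi_sub (hT : T.IsHermitian) (f g : Fin n → ℂ) :
    Phi hT f - Phi hT g = Phi hT (f - g) := by
  unfold Phi
  rw [← Matrix.sub_mul, ← Matrix.mul_sub, diagonal_sub]
  rfl

lemma Phi_smul (hT : T.IsHermitian) (c : ℂ) (f : Fin n → ℂ) :
    Phi hT (c • f) = c • Phi hT f := by
  unfold Phi
  rw [diagonal_smul, Matrix.mul_smul, Matrix.smul_mul]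

lemma Phi_one (hT : T.IsHermitian) : Phi hT 1 = 1 := by
  unfold Phi
  have hd : diagonal (1 : Fin n → ℂ) = 1 := diagonal_one
  rw [hd, mul_one, mem_unitaryGroup_iff.mp hT.eigenvectorUnitary.2]

lemma Phi_eigs (hT : T.IsHermitian) : Phi hT (fun i => (hT.eigenvalues i : ℂ)) = T :=
  hT.spectral_theorem.symm

lemma Phi_mul (hT : T.IsHermitian) (f g : Fin n → ℂ) :
    Phi hT f * Phi hT g = Phi hT (f * g) := by
  unfold Phi
  have hsUU : star (hT.eigenvectorUnitary : Matrix (Fin n) (Fin n) ℂ) *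
      (hT.eigenvectorUnitary : Matrix (Fin n) (Fin n) ℂ) = 1 :=
    mem_unitaryGroup_iff'.mp hT.eigenvectorUnitary.2
  simp only [Matrix.mul_assoc]
  rw [show star (hT.eigenvectorUnitary : Matrix (Fin n) (Fin n) ℂ) *
      ((hT.eigenvectorUnitary : Matrix (Fin n) (Fin n) ℂ) *
        (diagonal g * star (hT.eigenvectorUnitary : Matrix (Fin n) (Fin n) ℂ))) =
      diagonal g * star (hT.eigenvectorUnitary : Matrix (Fin n) (Fin n) ℂ) from by
    rw [← Matrix.mul_assoc, hsUU, Matrix.one_mul]]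
  rw [← Matrix.mul_assoc (diagonal f), diagonal_mul_diagonal]
  rfl

lemma Phi_inv (hT : T.IsHermitian) (f : Fin n → ℂ) (hf : ∀ i, f i ≠ 0) :
    (Phi hT f)⁻¹ = Phi hT f⁻¹ := by
  apply inv_eq_right_inv
  rw [Phi_mul]
  have : f * f⁻¹ = 1 := by funext i; exact mul_inv_cancel₀ (hf i)
  rw [this, Phi_one]

lemma Phi_det (hT : T.IsHermitian) (f : Fin n → ℂ) : (Phi hT f).det = ∏ i, f i := by
  unfold Phi
  rw [det_mul, det_mul, mul_comm, ← mul_assoc, ← det_mul,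
    mem_unitaryGroup_iff'.mp hT.eigenvectorUnitary.2, det_one, one_mul, det_diagonal]

lemma Phi_posSemidef (hT : T.IsHermitian) (f : Fin n → ℝ) (hf : ∀ i, 0 ≤ f i) :
    (Phi hT (fun i => (f i : ℂ))).PosSemidef := by
  unfold Phi
  rw [Matrix.star_eq_conjTranspose]
  refine PosSemidef.mul_mul_conjTranspose_same (PosSemidef.diagonal ?_) _
  intro i
  simpa using Complex.zero_le_real.mpr (hf i)

lemma eigvec_selfdot (hT : T.IsHermitian) (i : Fin n) :
    star ⇑(hT.eigenvectorBasis i) ⬝ᵥ ⇑(hT.eigenvectorBasis i) = 1 := by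
  have h := hT.eigenvectorBasis.orthonormal.1 i
  have h2 : (inner ℂ (hT.eigenvectorBasis i) (hT.eigenvectorBasis i) : ℂ) = 1 := by
    rw [@inner_self_eq_norm_sq_to_K ℂ, h]
    norm_num
  rw [EuclideanSpace.inner_eq_star_dotProduct, dotProduct_comm] at h2
  exact h2

lemma eigenvalue_le (hT : T.IsHermitian) {c : ℝ}
    (h : ((c : ℂ) • 1 - T).PosSemidef) (i : Fin n) : hT.eigenvalues i ≤ c := by
  have h0 := h.re_dotProduct_nonneg ⇑(hT.eigenvectorBasis i)
  rw [sub_mulVec, dotProduct_sub, map_sub, smul_mulVec, one_mulVec, dotProduct_smul,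
    eigvec_selfdot hT i, smul_eq_mul, mul_one] at h0
  have h1 := hT.eigenvalues_eq i
  simp only [RCLike.ofReal_re] at h0
  rw [← h1] at h0
  simpa using h0

lemma eigenvalue_ge (hT : T.IsHermitian) {c : ℝ}
    (h : (T - (c : ℂ) • 1).PosSemidef) (i : Fin n) : c ≤ hT.eigenvalues i := by
  have h0 := h.re_dotProduct_nonneg ⇑(hT.eigenvectorBasis i)
  rw [sub_mulVec, dotProduct_sub, map_sub, smul_mulVec, one_mulVec, dotProduct_smul,
    eigvec_selfdot hT i, smul_eq_mul, mul_one] at h0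
  have h1 := hT.eigenvalues_eq i
  simp only [RCLike.ofReal_re] at h0
  rw [← h1] at h0
  simpa using h0



lemma sqrt_package {X : Matrix (Fin n) (Fin n) ℂ} (hX : X.PosDef) :
    ∃ G : Matrix (Fin n) (Fin n) ℂ, G.IsHermitian ∧ G * G = X ∧ IsUnit G.det ∧ (G⁻¹)ᴴ = G⁻¹ := by
  have hH := hX.isHermitian
  have hpos : ∀ i, 0 < hH.eigenvalues i := fun i => hX.eigenvalues_pos i
  have hPs := Phi_posSemidef hH (fun i => Real.sqrt (hH.eigenvalues i)) (fun i => Real.sqrt_nonneg _)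
  have hGG : Phi hH (fun i => ((Real.sqrt (hH.eigenvalues i) : ℝ) : ℂ))
      * Phi hH (fun i => ((Real.sqrt (hH.eigenvalues i) : ℝ) : ℂ)) = X := by
    rw [Phi_mul]
    convert Phi_eigs hH using 2
    funext i
    simp only [Pi.mul_apply]
    rw [← Complex.ofReal_mul, Real.mul_self_sqrt (hpos i).le]
  refine ⟨_, hPs.1, hGG, ?_, ?_⟩
  · rw [isUnit_iff_ne_zero, Phi_det, Finset.prod_ne_zero_iff]
    intro i _
    exact Complex.ofReal_ne_zero.mpr (Real.sqrt_pos.mpr (hpos i)).ne'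
  · rw [conjTranspose_nonsing_inv, hPs.1]

lemma master {R S : Matrix (Fin n) (Fin n) ℂ} (hR : R.PosDef) (hS : S.IsHermitian) :
    ∃ μ : Fin n → ℝ,
      (∀ i, ∃ y : Fin n → ℂ, star y ⬝ᵥ S *ᵥ y = (μ i : ℂ) ∧ star y ⬝ᵥ R *ᵥ y = 1) ∧
      ‖(R + Complex.I • S).det‖
        = ‖R.det‖ * ∏ i, ‖(1 + Complex.I * (μ i : ℂ))‖ := by
  obtain ⟨G, hG, hGG, hGdet, hGi⟩ := sqrt_package hR
  set T := G⁻¹ * S * G⁻¹ with hTdef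
  have hT : T.IsHermitian := by
    have h := isHermitian_conjTranspose_mul_mul G⁻¹ hS
    rwa [hGi] at h
  refine ⟨hT.eigenvalues, fun i => ?_, ?_⟩
  · refine ⟨G⁻¹ *ᵥ ⇑(hT.eigenvectorBasis i), ?_, ?_⟩
    · have h1 : star (⇑(hT.eigenvectorBasis i)) ⬝ᵥ ((G⁻¹)ᴴ * S * G⁻¹) *ᵥ ⇑(hT.eigenvectorBasis i)
          = star (G⁻¹ *ᵥ ⇑(hT.eigenvectorBasis i)) ⬝ᵥ S *ᵥ (G⁻¹ *ᵥ ⇑(hT.eigenvectorBasis i)) :=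
        dot_conj S G⁻¹ _
      rw [hGi] at h1
      rw [← h1, ← hTdef, hT.mulVec_eigenvectorBasis i, dotProduct_smul, eigvec_selfdot hT i]
      rw [Complex.real_smul, mul_one]
    · have h1 : star (⇑(hT.eigenvectorBasis i)) ⬝ᵥ ((G⁻¹)ᴴ * R * G⁻¹) *ᵥ ⇑(hT.eigenvectorBasis i)
          = star (G⁻¹ *ᵥ ⇑(hT.eigenvectorBasis i)) ⬝ᵥ R *ᵥ (G⁻¹ *ᵥ ⇑(hT.eigenvectorBasis i)) :=
        dot_conj R G⁻¹ _
      rw [hGi] at h1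
      have h2 : G⁻¹ * R * G⁻¹ = 1 := by
        rw [← hGG, ← Matrix.mul_assoc G⁻¹ G G, nonsing_inv_mul G hGdet,
          Matrix.one_mul, mul_nonsing_inv G hGdet]
      rw [h2] at h1
      rw [← h1, one_mulVec, eigvec_selfdot hT i]
  · have hGTG : G * T * G = S := by
      rw [hTdef, ← Matrix.mul_assoc, ← Matrix.mul_assoc, mul_nonsing_inv G hGdet,
        Matrix.one_mul, Matrix.mul_assoc, nonsing_inv_mul G hGdet, Matrix.mul_one]
    have hdec : R + Complex.I • S = G * (1 + Complex.I • T) * G := by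
      rw [Matrix.mul_add, Matrix.mul_one, Matrix.add_mul, Matrix.mul_smul, Matrix.smul_mul]
      rw [hGTG]
      rw [hGG]
    have hPhi : Phi hT (fun i => 1 + Complex.I * (hT.eigenvalues i : ℂ)) = 1 + Complex.I • T := by
      have hfun : (fun i => 1 + Complex.I * (hT.eigenvalues i : ℂ))
          = ((1 : Fin n → ℂ) + Complex.I • fun i => (hT.eigenvalues i : ℂ)) := by
        funext i
        simp
      calc Phi hT (fun i => 1 + Complex.I * (hT.eigenvalues i : ℂ))
          = Phi hT ((1 : Fin n → ℂ) + Complex.I • fun i => (hT.eigenvalues i : ℂ)) := by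
            rw [hfun]
        _ = Phi hT 1 + Complex.I • Phi hT (fun i => (hT.eigenvalues i : ℂ)) := by
            rw [← Phi_add, Phi_smul]
        _ = 1 + Complex.I • T := by rw [Phi_one, Phi_eigs]
    calc ‖(R + Complex.I • S).det‖
        = ‖(R.det * (1 + Complex.I • T).det)‖ := by
          rw [hdec, det_mul, det_mul]
          congr 1
          rw [← hGG, det_mul]; ring
      _ = ‖R.det‖ * ∏ i, ‖(1 + Complex.I * (hT.eigenvalues i : ℂ))‖ := by
          rw [norm_mul, ← hPhi, Phi_det, norm_prod]

lemma abs_det_mono {X Y : Matrix (Fin n) (Fin n) ℂ} (hX : X.PosDef)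
    (hle : (Y - X).PosSemidef) : ‖X.det‖ ≤ ‖Y.det‖ := by
  obtain ⟨G, hG, hGG, hGdet, hGi⟩ := sqrt_package hX
  set W := G⁻¹ * (Y - X) * G⁻¹ with hWdef
  have hW : W.PosSemidef := by
    have h := hle.conjTranspose_mul_mul_same G⁻¹
    rwa [hGi] at h
  have hGWG : G * W * G = Y - X := by
    rw [hWdef, ← Matrix.mul_assoc, ← Matrix.mul_assoc, mul_nonsing_inv G hGdet,
      Matrix.one_mul, Matrix.mul_assoc, nonsing_inv_mul G hGdet, Matrix.mul_one]
  have hdec : Y = G * (1 + W) * G := by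
    rw [Matrix.mul_add, Matrix.mul_one, Matrix.add_mul, hGWG, hGG]
    abel
  have hPhi : Phi hW.1 (fun i => 1 + (hW.1.eigenvalues i : ℂ)) = 1 + W := by
    have hfun : (fun i => 1 + (hW.1.eigenvalues i : ℂ))
        = ((1 : Fin n → ℂ) + fun i => (hW.1.eigenvalues i : ℂ)) := by
      funext i
      simp
    rw [hfun, ← Phi_add, Phi_one, Phi_eigs]
  have hdet : ‖Y.det‖
      = ‖X.det‖ * ∏ i, ‖(1 + (hW.1.eigenvalues i : ℂ))‖ := by
    calc ‖Y.det‖ = ‖(X.det * (1 + W).det)‖ := by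
          rw [hdec, det_mul, det_mul]
          congr 1
          rw [← hGG, det_mul]; ring
      _ = _ := by rw [norm_mul, ← hPhi, Phi_det, norm_prod]
  rw [hdet]
  have hp : (1 : ℝ) ≤ ∏ i, ‖(1 + (hW.1.eigenvalues i : ℂ))‖ := by
    have h1 : (1 : ℝ) = ∏ _i : Fin n, (1 : ℝ) := by simp
    rw [h1]
    refine Finset.prod_le_prod (fun i _ => zero_le_one) fun i _ => ?_
    have h0 := hW.eigenvalues_nonneg i
    have : (1 : ℂ) + (hW.1.eigenvalues i : ℂ) = ((1 + hW.1.eigenvalues i : ℝ) : ℂ) := by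
      push_cast; ring
    rw [this, Complex.norm_real, Real.norm_eq_abs, abs_of_nonneg (by linarith)]
    linarith
  exact le_mul_of_one_le_right (norm_nonneg _) hp

lemma abs_det_re_le_abs_det {R S : Matrix (Fin n) (Fin n) ℂ} (hR : R.PosDef)
    (hS : S.IsHermitian) :
    ‖R.det‖ ≤ ‖(R + Complex.I • S).det‖ := by
  obtain ⟨μ, _, heq⟩ := master hR hS
  rw [heq]
  have hp : (1 : ℝ) ≤ ∏ i, ‖(1 + Complex.I * (μ i : ℂ))‖ := by
    have h1 : (1 : ℝ) = ∏ _i : Fin n, (1 : ℝ) := by simp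
    rw [h1]
    refine Finset.prod_le_prod (fun i _ => zero_le_one) fun i _ => ?_
    have h := Complex.re_le_norm (1 + Complex.I * (μ i : ℂ))
    simpa using h
  exact le_mul_of_one_le_right (norm_nonneg _) hp

lemma abs_det_le_sector {R S : Matrix (Fin n) (Fin n) ℂ} (hR : R.PosDef)
    (hS : S.IsHermitian) {t : ℝ} (ht : 0 ≤ t)
    (hsec : ∀ x, |(star x ⬝ᵥ S *ᵥ x).re| ≤ t * (star x ⬝ᵥ R *ᵥ x).re) :
    ‖(R + Complex.I • S).det‖ ≤ Real.sqrt (1 + t ^ 2) ^ n * ‖R.det‖ := by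
  obtain ⟨μ, hw, heq⟩ := master hR hS
  rw [heq]
  have hb : ∀ i, ‖(1 + Complex.I * (μ i : ℂ))‖ ≤ Real.sqrt (1 + t ^ 2) := by
    intro i
    obtain ⟨y, h1, h2⟩ := hw i
    have hμ : |μ i| ≤ t := by
      have h := hsec y
      rw [h1, h2] at h
      simpa using h
    have habs : ‖(1 + Complex.I * (μ i : ℂ))‖ = Real.sqrt (1 + (μ i) ^ 2) := by
      rw [Complex.norm_def]
      congr 1
      simp [Complex.normSq_apply]
      ring
    rw [habs]
    apply Real.sqrt_le_sqrt
    have : (μ i) ^ 2 ≤ t ^ 2 := by nlinarith [abs_nonneg (μ i), sq_abs (μ i)]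
    linarith
  calc ‖R.det‖ * ∏ i, ‖(1 + Complex.I * (μ i : ℂ))‖
      ≤ ‖R.det‖ * ∏ _i : Fin n, Real.sqrt (1 + t ^ 2) := by
        refine mul_le_mul_of_nonneg_left ?_ (norm_nonneg _)
        exact Finset.prod_le_prod (fun i _ => norm_nonneg _) (fun i _ => hb i)
    _ = Real.sqrt (1 + t ^ 2) ^ n * ‖R.det‖ := by
        rw [Finset.prod_const, Finset.card_univ, Fintype.card_fin, mul_comm]

lemma kant1 {R : Matrix (Fin n) (Fin n) ℂ} (hR : R.PosDef) {m M : ℝ}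
    (h1 : (R - (m : ℂ) • 1).PosSemidef) (h2 : ((M : ℂ) • 1 - R).PosSemidef) :
    (((M + m : ℝ) : ℂ) • 1 - R - ((m * M : ℝ) : ℂ) • R⁻¹).PosSemidef := by
  have hH := hR.isHermitian
  have hpos : ∀ i, 0 < hH.eigenvalues i := fun i => hR.eigenvalues_pos i
  have hin : R⁻¹ = Phi hH (fun i => ((hH.eigenvalues i : ℂ))⁻¹) := by
    have h := Phi_inv hH (fun i => (hH.eigenvalues i : ℂ))
      (fun i => Complex.ofReal_ne_zero.mpr (hpos i).ne')
    rw [Phi_eigs] at h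
    rw [h]
    rfl
  have key : Phi hH (fun i => (((M + m) - hH.eigenvalues i
        - (m * M) * (hH.eigenvalues i)⁻¹ : ℝ) : ℂ))
      = ((M + m : ℝ) : ℂ) • 1 - R - ((m * M : ℝ) : ℂ) • R⁻¹ := by
    have hfun : (fun i => (((M + m) - hH.eigenvalues i - (m * M) * (hH.eigenvalues i)⁻¹ : ℝ) : ℂ))
        = (((M + m : ℝ) : ℂ) • (1 : Fin n → ℂ) - (fun i => (hH.eigenvalues i : ℂ))
          - ((m * M : ℝ) : ℂ) • fun i => ((hH.eigenvalues i : ℂ))⁻¹) := by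
      funext i
      simp only [Pi.sub_apply, Pi.add_apply, Pi.smul_apply, Pi.one_apply, smul_eq_mul]
      push_cast
      ring
    rw [hfun, ← Phi_sub, ← Phi_sub, Phi_smul, Phi_smul, Phi_one, Phi_eigs, ← hin]
  rw [← key]
  refine Phi_posSemidef hH _ fun i => ?_
  have hm := eigenvalue_ge hH h1 i
  have hM := eigenvalue_le hH h2 i
  have hl := hpos i
  have : (M + m) - hH.eigenvalues i - (m * M) * (hH.eigenvalues i)⁻¹
      = ((M - hH.eigenvalues i) * (hH.eigenvalues i - m)) * (hH.eigenvalues i)⁻¹ := by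
    field_simp
    ring
  rw [this]
  exact mul_nonneg (mul_nonneg (by linarith) (by linarith)) (inv_nonneg.mpr hl.le)

lemma kant2 {H : Matrix (Fin n) (Fin n) ℂ} (hH : H.PosDef) {m M : ℝ}
    (hm : 0 < m) (hM : 0 < M) :
    ((((M + m) ^ 2 / (4 * m * M) : ℝ) : ℂ) • H + ((m * M : ℝ) : ℂ) • H⁻¹
      - ((M + m : ℝ) : ℂ) • 1).PosSemidef := by
  have hHH := hH.isHermitian
  have hpos : ∀ i, 0 < hHH.eigenvalues i := fun i => hH.eigenvalues_pos i
  have hin : H⁻¹ = Phi hHH (fun i => ((hHH.eigenvalues i : ℂ))⁻¹) := by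
    have h := Phi_inv hHH (fun i => (hHH.eigenvalues i : ℂ))
      (fun i => Complex.ofReal_ne_zero.mpr (hpos i).ne')
    rw [Phi_eigs] at h
    rw [h]
    rfl
  have key : Phi hHH (fun i => ((((M + m) ^ 2 / (4 * m * M)) * hHH.eigenvalues i
        + (m * M) * (hHH.eigenvalues i)⁻¹ - (M + m) : ℝ) : ℂ))
      = (((M + m) ^ 2 / (4 * m * M) : ℝ) : ℂ) • H + ((m * M : ℝ) : ℂ) • H⁻¹
        - ((M + m : ℝ) : ℂ) • 1 := by
    have hfun : (fun i => ((((M + m) ^ 2 / (4 * m * M)) * hHH.eigenvalues i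
          + (m * M) * (hHH.eigenvalues i)⁻¹ - (M + m) : ℝ) : ℂ))
        = ((((M + m) ^ 2 / (4 * m * M) : ℝ) : ℂ) • (fun i => (hHH.eigenvalues i : ℂ))
          + ((m * M : ℝ) : ℂ) • (fun i => ((hHH.eigenvalues i : ℂ))⁻¹)
          - ((M + m : ℝ) : ℂ) • (1 : Fin n → ℂ)) := by
      funext i
      simp only [Pi.sub_apply, Pi.add_apply, Pi.smul_apply, Pi.one_apply, smul_eq_mul]
      push_cast
      ring
    rw [hfun, ← Phi_sub, ← Phi_add, Phi_smul, Phi_smul, Phi_smul, Phi_one, Phi_eigs, ← hin]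
  rw [← key]
  refine Phi_posSemidef hHH _ fun i => ?_
  have hl := hpos i
  set lam := hHH.eigenvalues i with hlam
  have : ((M + m) ^ 2 / (4 * m * M)) * lam + (m * M) * lam⁻¹ - (M + m)
      = (((M + m) * lam - 2 * m * M) ^ 2 / (4 * m * M)) * lam⁻¹ := by
    field_simp
    ring
  rw [this]
  have h4 : 0 < 4 * m * M := by positivity
  exact mul_nonneg (div_nonneg (sq_nonneg _) h4.le) (inv_nonneg.mpr hl.le)

lemma harm_var (v w : ℝ) (hv : 0 ≤ v) (hw : 0 ≤ w)
    {Ra Rb Hm P Q : Matrix (Fin n) (Fin n) ℂ}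
    (hRa : Ra.PosDef) (hRb : Rb.PosDef) (hHm : Hm.IsHermitian)
    (hPQ : (v : ℂ) • P + (w : ℂ) • Q = 1)
    (hGH : ((v : ℂ) • Ra⁻¹ + (w : ℂ) • Rb⁻¹) * Hm = 1) :
    ((v : ℂ) • (Pᴴ * Ra * P) + (w : ℂ) • (Qᴴ * Rb * Q) - Hm).PosSemidef := by
  have hRa' : IsUnit Ra.det := isUnit_iff_ne_zero.mpr hRa.det_pos.ne'
  have hRb' : IsUnit Rb.det := isUnit_iff_ne_zero.mpr hRb.det_pos.ne'
  have hRaih : (Ra⁻¹)ᴴ = Ra⁻¹ := by rw [conjTranspose_nonsing_inv, hRa.isHermitian]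
  have hRbih : (Rb⁻¹)ᴴ = Rb⁻¹ := by rw [conjTranspose_nonsing_inv, hRb.isHermitian]
  set Wa := P - Ra⁻¹ * Hm with hWa
  set Wb := Q - Rb⁻¹ * Hm with hWb
  have ea : Waᴴ * Ra * Wa = Pᴴ * Ra * P - Pᴴ * Hm - Hm * P + Hm * Ra⁻¹ * Hm := by
    have hWaH : Waᴴ = Pᴴ - Hm * Ra⁻¹ := by
      rw [hWa, conjTranspose_sub, conjTranspose_mul, hHm, hRaih]
    rw [hWaH, hWa]
    have c1 : Pᴴ * Ra * (Ra⁻¹ * Hm) = Pᴴ * Hm := by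
      rw [Matrix.mul_assoc Pᴴ Ra, ← Matrix.mul_assoc Ra, mul_nonsing_inv _ hRa', Matrix.one_mul]
    have c2 : Hm * Ra⁻¹ * Ra * P = Hm * P := by
      rw [Matrix.mul_assoc Hm Ra⁻¹ Ra, nonsing_inv_mul _ hRa', Matrix.mul_one]
    have c3 : Hm * Ra⁻¹ * Ra * (Ra⁻¹ * Hm) = Hm * Ra⁻¹ * Hm := by
      rw [Matrix.mul_assoc Hm Ra⁻¹ Ra, nonsing_inv_mul _ hRa', Matrix.mul_one, Matrix.mul_assoc]
    simp only [Matrix.sub_mul, Matrix.mul_sub]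
    rw [c1, c2, c3]
    abel
  have eb : Wbᴴ * Rb * Wb = Qᴴ * Rb * Q - Qᴴ * Hm - Hm * Q + Hm * Rb⁻¹ * Hm := by
    have hWbH : Wbᴴ = Qᴴ - Hm * Rb⁻¹ := by
      rw [hWb, conjTranspose_sub, conjTranspose_mul, hHm, hRbih]
    rw [hWbH, hWb]
    have c1 : Qᴴ * Rb * (Rb⁻¹ * Hm) = Qᴴ * Hm := by
      rw [Matrix.mul_assoc Qᴴ Rb, ← Matrix.mul_assoc Rb, mul_nonsing_inv _ hRb', Matrix.one_mul]
    have c2 : Hm * Rb⁻¹ * Rb * Q = Hm * Q := by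
      rw [Matrix.mul_assoc Hm Rb⁻¹ Rb, nonsing_inv_mul _ hRb', Matrix.mul_one]
    have c3 : Hm * Rb⁻¹ * Rb * (Rb⁻¹ * Hm) = Hm * Rb⁻¹ * Hm := by
      rw [Matrix.mul_assoc Hm Rb⁻¹ Rb, nonsing_inv_mul _ hRb', Matrix.mul_one, Matrix.mul_assoc]
    simp only [Matrix.sub_mul, Matrix.mul_sub]
    rw [c1, c2, c3]
    abel
  have d1 : (v : ℂ) • (Pᴴ * Hm) + (w : ℂ) • (Qᴴ * Hm) = Hm := by
    rw [← Matrix.smul_mul, ← Matrix.smul_mul, ← Matrix.add_mul]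
    have h : (v : ℂ) • Pᴴ + (w : ℂ) • Qᴴ = ((v : ℂ) • P + (w : ℂ) • Q)ᴴ := by
      rw [conjTranspose_add, conjTranspose_smul, conjTranspose_smul, Complex.star_def,
        Complex.conj_ofReal, Complex.conj_ofReal]
    rw [h, hPQ, conjTranspose_one, Matrix.one_mul]
  have d2 : (v : ℂ) • (Hm * P) + (w : ℂ) • (Hm * Q) = Hm := by
    rw [← Matrix.mul_smul, ← Matrix.mul_smul, ← Matrix.mul_add, hPQ, Matrix.mul_one]
  have d3 : (v : ℂ) • (Hm * Ra⁻¹ * Hm) + (w : ℂ) • (Hm * Rb⁻¹ * Hm) = Hm := by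
    have e1 : (v : ℂ) • (Hm * Ra⁻¹ * Hm) = Hm * ((v : ℂ) • Ra⁻¹) * Hm := by
      rw [Matrix.mul_smul, Matrix.smul_mul]
    have e2 : (w : ℂ) • (Hm * Rb⁻¹ * Hm) = Hm * ((w : ℂ) • Rb⁻¹) * Hm := by
      rw [Matrix.mul_smul, Matrix.smul_mul]
    rw [e1, e2, ← Matrix.add_mul, ← Matrix.mul_add, Matrix.mul_assoc, hGH, Matrix.mul_one]
  have key : (v : ℂ) • (Pᴴ * Ra * P) + (w : ℂ) • (Qᴴ * Rb * Q) - Hm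
      = (v : ℂ) • (Waᴴ * Ra * Wa) + (w : ℂ) • (Wbᴴ * Rb * Wb) := by
    rw [ea, eb]
    have expand : (v : ℂ) • (Pᴴ * Ra * P - Pᴴ * Hm - Hm * P + Hm * Ra⁻¹ * Hm)
          + (w : ℂ) • (Qᴴ * Rb * Q - Qᴴ * Hm - Hm * Q + Hm * Rb⁻¹ * Hm)
        = ((v : ℂ) • (Pᴴ * Ra * P) + (w : ℂ) • (Qᴴ * Rb * Q))
          - ((v : ℂ) • (Pᴴ * Hm) + (w : ℂ) • (Qᴴ * Hm))
          - ((v : ℂ) • (Hm * P) + (w : ℂ) • (Hm * Q))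
          + ((v : ℂ) • (Hm * Ra⁻¹ * Hm) + (w : ℂ) • (Hm * Rb⁻¹ * Hm)) := by
      simp only [smul_sub, smul_add]
      abel
    rw [expand, d1, d2, d3]
    abel
  rw [key]
  exact (posSemidef_real_smul (hRa.posSemidef.conjTranspose_mul_mul_same Wa) hv).add
    (posSemidef_real_smul (hRb.posSemidef.conjTranspose_mul_mul_same Wb) hw)

lemma combo_abs_le {a b ra rb t v : ℝ} (hv0 : 0 ≤ v) (hv1 : v ≤ 1)
    (ha : |a| ≤ t * ra) (hb : |b| ≤ t * rb) :
    |v * a + (1 - v) * b| ≤ t * (v * ra + (1 - v) * rb) := by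
  have h := abs_add_le (v * a) ((1 - v) * b)
  rw [abs_mul, abs_mul, abs_of_nonneg hv0, abs_of_nonneg (by linarith : (0:ℝ) ≤ 1 - v)] at h
  nlinarith [mul_le_mul_of_nonneg_left ha hv0,
    mul_le_mul_of_nonneg_left hb (by linarith : (0:ℝ) ≤ 1 - v)]

end SectorAux

theorem stmt10 {n : ℕ} (θ : ℝ) (hθ0 : 0 ≤ θ) (hθ1 : θ < Real.pi / 2)
    (A B : Matrix (Fin n) (Fin n) ℂ)
    (hA : sectorClass θ A) (hB : sectorClass θ B)
    (m M : ℝ) (hm : 0 < m) (hmM : m ≤ M)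
    (hmA : loewnerLE (m • (1 : Matrix (Fin n) (Fin n) ℂ)) (matRe A))
    (hAM : loewnerLE (matRe A) (M • (1 : Matrix (Fin n) (Fin n) ℂ)))
    (hmB : loewnerLE (m • (1 : Matrix (Fin n) (Fin n) ℂ)) (matRe B))
    (hBM : loewnerLE (matRe B) (M • (1 : Matrix (Fin n) (Fin n) ℂ)))
    (v : ℝ) (hv0 : 0 ≤ v) (hv1 : v ≤ 1) :
    ‖(amean v A B).det‖ ≤
      (Real.cos θ)⁻¹ ^ n * ((M + m) ^ 2 / (4 * m * M)) ^ n * ‖(hmean v A B).det‖ := by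
  classical
  have hM0 : 0 < M := lt_of_lt_of_le hm hmM
  have hπ := Real.pi_pos
  have hcos : 0 < Real.cos θ := Real.cos_pos_of_mem_Ioo ⟨by linarith, hθ1⟩
  have ht0 : 0 ≤ Real.tan θ := Real.tan_nonneg_of_nonneg_of_le_pi_div_two hθ0 hθ1.le
  have hs : Real.sqrt (1 + Real.tan θ ^ 2) = (Real.cos θ)⁻¹ := by
    rw [← Real.inv_sqrt_one_add_tan_sq hcos, inv_inv]
  set K : ℝ := (M + m) ^ 2 / (4 * m * M) with hK
  have hKpos : 0 < K := by rw [hK]; positivity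
  have hRA : (matRe A).PosDef := hA.1
  have hRB : (matRe B).PosDef := hB.1
  have hsmul : ∀ r : ℝ, (r • (1 : Matrix (Fin n) (Fin n) ℂ)) = (r : ℂ) • 1 := by
    intro r; ext i j; simp [Matrix.smul_apply, Complex.real_smul]
  have hmA' : (matRe A - (m : ℂ) • 1).PosSemidef := by
    have h := hmA; unfold loewnerLE at h; rwa [hsmul] at h
  have hAM' : ((M : ℂ) • 1 - matRe A).PosSemidef := by
    have h := hAM; unfold loewnerLE at h; rwa [hsmul] at h
  have hmB' : (matRe B - (m : ℂ) • 1).PosSemidef := by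
    have h := hmB; unfold loewnerLE at h; rwa [hsmul] at h
  have hBM' : ((M : ℂ) • 1 - matRe B).PosSemidef := by
    have h := hBM; unfold loewnerLE at h; rwa [hsmul] at h
  have hdetA : IsUnit A.det := SectorAux.isUnit_det_of_matRe_posDef hRA
  have hdetB : IsUnit B.det := SectorAux.isUnit_det_of_matRe_posDef hRB
  -- the arithmetic mean
  have hReC : matRe (amean v A B) = (v : ℂ) • matRe A + ((1 - v : ℝ) : ℂ) • matRe B := by
    unfold amean
    rw [SectorAux.matRe_add, SectorAux.matRe_smul_real, SectorAux.matRe_smul_real]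
  have hImC : matIm (amean v A B) = (v : ℂ) • matIm A + ((1 - v : ℝ) : ℂ) • matIm B := by
    unfold amean
    rw [SectorAux.matIm_add, SectorAux.matIm_smul_real, SectorAux.matIm_smul_real]
  have hReCpd : (matRe (amean v A B)).PosDef := by
    rw [hReC]; exact SectorAux.convex_posDef hRA hRB v hv0 hv1
  have hsecC : ∀ x, |(star x ⬝ᵥ (matIm (amean v A B)) *ᵥ x).re|
      ≤ Real.tan θ * (star x ⬝ᵥ (matRe (amean v A B)) *ᵥ x).re := by
    intro x
    rw [hReC, hImC]
    simp only [add_mulVec, smul_mulVec, dotProduct_add, dotProduct_smul, smul_eq_mul,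
      Complex.add_re, Complex.re_ofReal_mul]
    exact SectorAux.combo_abs_le hv0 hv1 (hA.2 x) (hB.2 x)
  have step1 : ‖(amean v A B).det‖
      ≤ Real.sqrt (1 + Real.tan θ ^ 2) ^ n * ‖(matRe (amean v A B)).det‖ := by
    have h := SectorAux.abs_det_le_sector hReCpd (SectorAux.matIm_isHermitian _) ht0 hsecC
    rwa [SectorAux.matRe_add_smul_matIm] at h
  -- harmonic side matrices
  set G : Matrix (Fin n) (Fin n) ℂ
      := (v : ℂ) • (matRe A)⁻¹ + ((1 - v : ℝ) : ℂ) • (matRe B)⁻¹ with hGdef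
  have hGpd : G.PosDef := SectorAux.convex_posDef hRA.inv hRB.inv v hv0 hv1
  have hGdet : IsUnit G.det := isUnit_iff_ne_zero.mpr hGpd.det_pos.ne'
  have hHpd : G⁻¹.PosDef := hGpd.inv
  have hHG : (G⁻¹)⁻¹ = G := Matrix.nonsing_inv_nonsing_inv G hGdet
  have k1A := SectorAux.kant1 hRA hmA' hAM'
  have k1B := SectorAux.kant1 hRB hmB' hBM'
  have hcomb : (((M + m : ℝ) : ℂ) • (1 : Matrix (Fin n) (Fin n) ℂ)
      - matRe (amean v A B) - ((m * M : ℝ) : ℂ) • G).PosSemidef := by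
    have h := (SectorAux.posSemidef_real_smul k1A hv0).add
      (SectorAux.posSemidef_real_smul k1B (by linarith : (0:ℝ) ≤ 1 - v))
    have heq : (v : ℂ) • (((M + m : ℝ) : ℂ) • (1 : Matrix (Fin n) (Fin n) ℂ)
          - matRe A - ((m * M : ℝ) : ℂ) • (matRe A)⁻¹)
        + ((1 - v : ℝ) : ℂ) • (((M + m : ℝ) : ℂ) • (1 : Matrix (Fin n) (Fin n) ℂ)
          - matRe B - ((m * M : ℝ) : ℂ) • (matRe B)⁻¹)
        = ((M + m : ℝ) : ℂ) • (1 : Matrix (Fin n) (Fin n) ℂ)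
          - matRe (amean v A B) - ((m * M : ℝ) : ℂ) • G := by
      rw [hReC, hGdef]
      push_cast
      module
    rwa [heq] at h
  have k2 := SectorAux.kant2 hHpd hm hM0
  rw [hHG, ← hK] at k2
  have step3 : ((K : ℂ) • G⁻¹ - matRe (amean v A B)).PosSemidef := by
    have h := hcomb.add k2
    have heq2 : (((M + m : ℝ) : ℂ) • (1 : Matrix (Fin n) (Fin n) ℂ)
          - matRe (amean v A B) - ((m * M : ℝ) : ℂ) • G)
        + ((K : ℂ) • G⁻¹ + ((m * M : ℝ) : ℂ) • G - ((M + m : ℝ) : ℂ) • 1)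
        = (K : ℂ) • G⁻¹ - matRe (amean v A B) := by
      abel
    rwa [heq2] at h
  have step4 : ‖(matRe (amean v A B)).det‖ ≤ K ^ n * ‖(G⁻¹).det‖ := by
    have h := SectorAux.abs_det_mono hReCpd step3
    rw [det_smul, Fintype.card_fin, norm_mul, norm_pow, Complex.norm_real, Real.norm_eq_abs,
      abs_of_pos hKpos] at h
    exact h
  set D : Matrix (Fin n) (Fin n) ℂ := (v : ℂ) • A⁻¹ + ((1 - v : ℝ) : ℂ) • B⁻¹ with hDdef
  have hdetAi : IsUnit A⁻¹.det := A.isUnit_nonsing_inv_det hdetA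
  have hdetBi : IsUnit B⁻¹.det := B.isUnit_nonsing_inv_det hdetB
  have hReAi : matRe A⁻¹ = (A⁻¹)ᴴ * matRe A * A⁻¹ := SectorAux.matRe_inv hdetA
  have hReBi : matRe B⁻¹ = (B⁻¹)ᴴ * matRe B * B⁻¹ := SectorAux.matRe_inv hdetB
  have hReAipd : (matRe A⁻¹).PosDef := by rw [hReAi]; exact SectorAux.posDef_conj hRA hdetAi
  have hReBipd : (matRe B⁻¹).PosDef := by rw [hReBi]; exact SectorAux.posDef_conj hRB hdetBi
  have hReD : matRe D = (v : ℂ) • matRe A⁻¹ + ((1 - v : ℝ) : ℂ) • matRe B⁻¹ := by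
    rw [hDdef, SectorAux.matRe_add, SectorAux.matRe_smul_real, SectorAux.matRe_smul_real]
  have hReDpd : (matRe D).PosDef := by
    rw [hReD]; exact SectorAux.convex_posDef hReAipd hReBipd v hv0 hv1
  have hdetD : IsUnit D.det := SectorAux.isUnit_det_of_matRe_posDef hReDpd
  have hdetDi : IsUnit D⁻¹.det := D.isUnit_nonsing_inv_det hdetD
  have hPQ : (v : ℂ) • (A⁻¹ * D⁻¹) + ((1 - v : ℝ) : ℂ) • (B⁻¹ * D⁻¹) = 1 := by
    rw [← Matrix.smul_mul, ← Matrix.smul_mul, ← Matrix.add_mul, ← hDdef]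
    exact mul_nonsing_inv D hdetD
  have hReDi : matRe D⁻¹ = (v : ℂ) • ((A⁻¹ * D⁻¹)ᴴ * matRe A * (A⁻¹ * D⁻¹))
      + ((1 - v : ℝ) : ℂ) • ((B⁻¹ * D⁻¹)ᴴ * matRe B * (B⁻¹ * D⁻¹)) := by
    rw [SectorAux.matRe_inv hdetD, hReD, hReAi, hReBi]
    simp only [Matrix.mul_add, Matrix.add_mul, Matrix.mul_smul, Matrix.smul_mul,
      conjTranspose_mul, Matrix.mul_assoc]
  have hGH : ((v : ℂ) • (matRe A)⁻¹ + ((1 - v : ℝ) : ℂ) • (matRe B)⁻¹) * G⁻¹ = 1 := by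
    rw [← hGdef]
    exact mul_nonsing_inv G hGdet
  have step5 : (matRe D⁻¹ - G⁻¹).PosSemidef := by
    have h := SectorAux.harm_var v (1 - v) hv0 (by linarith) hRA hRB hHpd.isHermitian hPQ hGH
    rwa [← hReDi] at h
  have step6 : ‖(G⁻¹).det‖ ≤ ‖(matRe D⁻¹).det‖ :=
    SectorAux.abs_det_mono hHpd step5
  have hReDipd : (matRe D⁻¹).PosDef := by
    rw [SectorAux.matRe_inv hdetD]; exact SectorAux.posDef_conj hReDpd hdetDi
  have step7 : ‖(matRe D⁻¹).det‖ ≤ ‖(D⁻¹).det‖ := by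
    have h := SectorAux.abs_det_re_le_abs_det hReDipd (SectorAux.matIm_isHermitian D⁻¹)
    rwa [SectorAux.matRe_add_smul_matIm] at h
  have hhm : hmean v A B = D⁻¹ := by unfold hmean; rw [← hDdef]
  rw [← hs, hhm]
  calc ‖(amean v A B).det‖
      ≤ Real.sqrt (1 + Real.tan θ ^ 2) ^ n * ‖(matRe (amean v A B)).det‖ := step1
    _ ≤ Real.sqrt (1 + Real.tan θ ^ 2) ^ n * (K ^ n * ‖(D⁻¹).det‖) := by
        refine mul_le_mul_of_nonneg_left ?_ (by positivity)
        refine step4.trans ?_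
        exact mul_le_mul_of_nonneg_left (step6.trans step7) (by positivity)
    _ = Real.sqrt (1 + Real.tan θ ^ 2) ^ n * K ^ n * ‖(D⁻¹).det‖ := by ring
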